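/- Let (H, s_H, t_H) be an R^e-ring (with commuting source s_H: R → H and target t_H: R^op → H) and (A, s_A) an R-ring. Then the Takeuchi product H ×_R A := { Σ_i h^i ⊗_R a^i ∈ H ⊗_R A : Σ_i h^i t_H(r) ⊗_R a^i = Σ_i h^i ⊗_R a^i s_A(r) for all r ∈ R } is a subalgebra of the (generally non-associative) product structure: it is closed under the factorwise multiplication (Σ h^i ⊗_R a^i)(Σ h̃^j ⊗_R ã^j) = Σ h^i h̃^j ⊗_R a^i ã^j, contains 1_H ⊗_R 1_A, and this makes H ×_R A an associative unital k-algebra. -/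
import Mathlib

open TensorProduct LinearMap MulOpposite

noncomputable section
namespace DKT

variable (k : Type*) [CommRing k] (R H A : Type*) [Ring R] [Ring H] [Ring A]
  [Algebra k R] [Algebra k H] [Algebra k A]
  (sH : R →ₐ[k] H) (tH : Rᵐᵒᵖ →ₐ[k] H) (sA : R →ₐ[k] A)

/-- The balancing relations defining `H ⊗_R A`, where the right `R`-action on `H` is
`h · r = t_H(r) h` (from the bimodule structure `r · h · r' = s_H(r) t_H(r') h`) and the
left `R`-action on `A` is `r · a = s_A(r) a`. -/
def rel : Submodule k (H ⊗[k] A) :=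
  Submodule.span k {x | ∃ (r : R) (h : H) (a : A),
    x = (tH (op r) * h) ⊗ₜ[k] a - h ⊗ₜ[k] (sA r * a)}

/-- `H ⊗_R A` as a quotient of `H ⊗_k A`. -/
abbrev Q := (H ⊗[k] A) ⧸ rel k R H A tH sA

/-- The canonical projection `H ⊗_k A → H ⊗_R A`. -/
abbrev mkq : H ⊗[k] A →ₗ[k] Q k R H A tH sA := (rel k R H A tH sA).mkQ

/-- The Takeuchi condition submodule `H ×_R A ⊆ H ⊗_R A`:
`Σ hⁱ t_H(r) ⊗_R aⁱ = Σ hⁱ ⊗_R aⁱ s_A(r)` for all `r ∈ R`. -/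
def takeuchi : Submodule k (Q k R H A tH sA) :=
  Submodule.map (mkq k R H A tH sA)
    (⨅ r : R, LinearMap.ker
      ((mkq k R H A tH sA) ∘ₗ
        (LinearMap.rTensor A (LinearMap.mulRight k (tH (op r))) -
          LinearMap.lTensor H (LinearMap.mulRight k (sA r)))))

end DKT
end

noncomputable section Aux
namespace DKTaux
open DKT

variable {k : Type*} [CommRing k] {R H A : Type*} [Ring R] [Ring H] [Ring A]
  [Algebra k R] [Algebra k H] [Algebra k A]
  (tH : Rᵐᵒᵖ →ₐ[k] H) (sA : R →ₐ[k] A)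

abbrev K : Submodule k (H ⊗[k] A) :=
  ⨅ r : R, LinearMap.ker
    ((mkq k R H A tH sA) ∘ₗ
      (LinearMap.rTensor A (LinearMap.mulRight k (tH (op r))) -
        LinearMap.lTensor H (LinearMap.mulRight k (sA r))))

lemma rel_mul_mem {x : H ⊗[k] A} (hx : x ∈ rel k R H A tH sA) (y : H ⊗[k] A) :
    x * y ∈ rel k R H A tH sA := by
  induction hx using Submodule.span_induction with
  | mem x hx =>
    obtain ⟨r, h, a, rfl⟩ := hx
    induction y using TensorProduct.induction_on with
    | zero => simpa using (rel k R H A tH sA).zero_mem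
    | tmul h' a' =>
      rw [sub_mul, Algebra.TensorProduct.tmul_mul_tmul, Algebra.TensorProduct.tmul_mul_tmul]
      exact Submodule.subset_span ⟨r, h * h', a * a', by rw [mul_assoc, mul_assoc]⟩
    | add y₁ y₂ hy₁ hy₂ => rw [mul_add]; exact (rel k R H A tH sA).add_mem hy₁ hy₂
  | zero => simpa using (rel k R H A tH sA).zero_mem
  | add a b _ _ ha hb => rw [add_mul]; exact (rel k R H A tH sA).add_mem ha hb
  | smul c a _ ha => rw [smul_mul_assoc]; exact (rel k R H A tH sA).smul_mem c ha

lemma mul_rTensor (c : H) (m : H ⊗[k] A) (h : H) (a : A) :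
    m * ((c * h) ⊗ₜ[k] a) = (LinearMap.rTensor A (LinearMap.mulRight k c) m) * (h ⊗ₜ[k] a) := by
  induction m using TensorProduct.induction_on with
  | zero => simp
  | tmul h' a' => simp [Algebra.TensorProduct.tmul_mul_tmul, mul_assoc]
  | add m₁ m₂ h₁ h₂ => simp [add_mul, h₁, h₂]

lemma mul_lTensor (c : A) (m : H ⊗[k] A) (h : H) (a : A) :
    m * (h ⊗ₜ[k] (c * a)) = (LinearMap.lTensor H (LinearMap.mulRight k c) m) * (h ⊗ₜ[k] a) := by
  induction m using TensorProduct.induction_on with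
  | zero => simp
  | tmul h' a' => simp [Algebra.TensorProduct.tmul_mul_tmul, mul_assoc]
  | add m₁ m₂ h₁ h₂ => simp [add_mul, h₁, h₂]

lemma K_mul_rel {m : H ⊗[k] A} (hm : m ∈ K tH sA) {x : H ⊗[k] A}
    (hx : x ∈ rel k R H A tH sA) : m * x ∈ rel k R H A tH sA := by
  induction hx using Submodule.span_induction with
  | mem x hx =>
    obtain ⟨r, h, a, rfl⟩ := hx
    rw [mul_sub, mul_rTensor, mul_lTensor, ← sub_mul]
    refine rel_mul_mem tH sA ?_ _
    have h := (Submodule.mem_iInf _).1 hm r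
    rw [LinearMap.mem_ker, LinearMap.comp_apply, Submodule.mkQ_apply,
      Submodule.Quotient.mk_eq_zero, LinearMap.sub_apply] at h
    exact h
  | zero => simpa using (rel k R H A tH sA).zero_mem
  | add a b _ _ ha hb => rw [mul_add]; exact (rel k R H A tH sA).add_mem ha hb
  | smul c a _ ha => rw [mul_smul_comm]; exact (rel k R H A tH sA).smul_mem c ha

lemma rTensor_mul (c : H) (m n : H ⊗[k] A) :
    LinearMap.rTensor A (LinearMap.mulRight k c) (m * n) =
      m * LinearMap.rTensor A (LinearMap.mulRight k c) n := by
  induction m using TensorProduct.induction_on with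
  | zero => simp
  | tmul h' a' =>
    induction n using TensorProduct.induction_on with
    | zero => simp
    | tmul h a => simp [Algebra.TensorProduct.tmul_mul_tmul, mul_assoc]
    | add n₁ n₂ h₁ h₂ => simp [mul_add, h₁, h₂]
  | add m₁ m₂ h₁ h₂ => simp [add_mul, h₁, h₂]

lemma lTensor_mul (c : A) (m n : H ⊗[k] A) :
    LinearMap.lTensor H (LinearMap.mulRight k c) (m * n) =
      m * LinearMap.lTensor H (LinearMap.mulRight k c) n := by
  induction m using TensorProduct.induction_on with
  | zero => simp
  | tmul h' a' =>
    induction n using TensorProduct.induction_on with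
    | zero => simp
    | tmul h a => simp [Algebra.TensorProduct.tmul_mul_tmul, mul_assoc]
    | add n₁ n₂ h₁ h₂ => simp [mul_add, h₁, h₂]
  | add m₁ m₂ h₁ h₂ => simp [add_mul, h₁, h₂]

lemma mul_mem_K {m n : H ⊗[k] A} (hm : m ∈ K tH sA) (hn : n ∈ K tH sA) :
    m * n ∈ K tH sA := by
  rw [Submodule.mem_iInf]
  intro r
  rw [LinearMap.mem_ker, LinearMap.comp_apply, LinearMap.sub_apply,
    rTensor_mul, lTensor_mul, ← mul_sub]
  have hn' : (LinearMap.rTensor A (LinearMap.mulRight k (tH (op r))) -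
      LinearMap.lTensor H (LinearMap.mulRight k (sA r))) n ∈ rel k R H A tH sA := by
    have h := (Submodule.mem_iInf _).1 hn r
    rw [LinearMap.mem_ker, LinearMap.comp_apply, Submodule.mkQ_apply,
      Submodule.Quotient.mk_eq_zero] at h
    exact h
  rw [LinearMap.sub_apply] at hn'
  simpa [Submodule.Quotient.mk_eq_zero] using K_mul_rel tH sA hm hn'

lemma one_mem_K : ((1 : H) ⊗ₜ[k] (1 : A)) ∈ K tH sA := by
  rw [Submodule.mem_iInf]
  intro r
  rw [LinearMap.mem_ker, LinearMap.comp_apply, LinearMap.sub_apply,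
    Submodule.mkQ_apply, Submodule.Quotient.mk_eq_zero]
  have hgen : ((tH (op r) * 1) ⊗ₜ[k] (1 : A) - (1 : H) ⊗ₜ[k] (sA r * 1))
      ∈ rel k R H A tH sA := Submodule.subset_span ⟨r, 1, 1, rfl⟩
  simpa using hgen

lemma key {m₀ : H ⊗[k] A} (hm₀ : m₀ ∈ K tH sA) {m n n' : H ⊗[k] A}
    (hm : mkq k R H A tH sA m = mkq k R H A tH sA m₀)
    (hn : mkq k R H A tH sA n = mkq k R H A tH sA n') :
    mkq k R H A tH sA (m * n) = mkq k R H A tH sA (m₀ * n') := by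
  have h1 : mkq k R H A tH sA (m * n) = mkq k R H A tH sA (m₀ * n) := by
    rw [← sub_eq_zero, ← map_sub, ← sub_mul, Submodule.mkQ_apply,
      Submodule.Quotient.mk_eq_zero]
    refine rel_mul_mem tH sA ?_ _
    exact (Submodule.Quotient.eq _).1 hm
  have h2 : mkq k R H A tH sA (m₀ * n) = mkq k R H A tH sA (m₀ * n') := by
    rw [← sub_eq_zero, ← map_sub, ← mul_sub, Submodule.mkQ_apply,
      Submodule.Quotient.mk_eq_zero]
    refine K_mul_rel tH sA hm₀ ?_
    exact (Submodule.Quotient.eq _).1 hn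
  rw [h1, h2]

/-- chosen representative in K -/
def repr (x : takeuchi k R H A tH sA) : H ⊗[k] A := x.2.choose

lemma repr_mem (x : takeuchi k R H A tH sA) : repr tH sA x ∈ K tH sA := x.2.choose_spec.1

lemma repr_spec (x : takeuchi k R H A tH sA) :
    mkq k R H A tH sA (repr tH sA x) = (x : Q k R H A tH sA) := x.2.choose_spec.2

def tmul (x y : takeuchi k R H A tH sA) : takeuchi k R H A tH sA :=
  ⟨mkq k R H A tH sA (repr tH sA x * repr tH sA y),
    ⟨_, mul_mem_K tH sA (repr_mem tH sA x) (repr_mem tH sA y), rfl⟩⟩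

lemma tmul_spec (x y : takeuchi k R H A tH sA) (m n : H ⊗[k] A)
    (hm : (x : Q k R H A tH sA) = mkq k R H A tH sA m)
    (hn : (y : Q k R H A tH sA) = mkq k R H A tH sA n) :
    ((tmul tH sA x y : takeuchi k R H A tH sA) : Q k R H A tH sA) =
      mkq k R H A tH sA (m * n) := by
  show mkq k R H A tH sA (repr tH sA x * repr tH sA y) = _
  exact (key tH sA (repr_mem tH sA x) (hm.symm.trans (repr_spec tH sA x).symm)
    (hn.symm.trans (repr_spec tH sA y).symm)).symm

end DKTaux
end Aux

/-- Let `(H, s_H, t_H)` be an `R^e`-ring (with commuting source and target)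
and `(A, s_A)` an `R`-ring. Then the Takeuchi product `H ×_R A ⊆ H ⊗_R A` carries a
well-defined factorwise multiplication `(Σ hⁱ ⊗ aⁱ)(Σ h̃ʲ ⊗ ãʲ) = Σ hⁱh̃ʲ ⊗ aⁱãʲ`
(independent of the chosen representatives in `H ⊗_k A`, whose factorwise product is the
tensor product algebra multiplication), contains `1_H ⊗_R 1_A`, and becomes an associative
unital `k`-algebra. -/
theorem stmt1 (k : Type*) [CommRing k] (R H A : Type*) [Ring R] [Ring H] [Ring A]
    [Algebra k R] [Algebra k H] [Algebra k A]
    (sH : R →ₐ[k] H) (tH : Rᵐᵒᵖ →ₐ[k] H) (sA : R →ₐ[k] A)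
    (hcomm : ∀ (r r' : R), sH r * tH (op r') = tH (op r') * sH r) :
    ∃ (mul : DKT.takeuchi k R H A tH sA → DKT.takeuchi k R H A tH sA →
        DKT.takeuchi k R H A tH sA)
      (one : DKT.takeuchi k R H A tH sA),
      (∀ (x y : DKT.takeuchi k R H A tH sA) (m n : H ⊗[k] A),
        (x : DKT.Q k R H A tH sA) = DKT.mkq k R H A tH sA m →
        (y : DKT.Q k R H A tH sA) = DKT.mkq k R H A tH sA n →
        ((mul x y : DKT.takeuchi k R H A tH sA) : DKT.Q k R H A tH sA) =
          DKT.mkq k R H A tH sA (m * n)) ∧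
      ((one : DKT.Q k R H A tH sA) = DKT.mkq k R H A tH sA ((1 : H) ⊗ₜ[k] (1 : A))) ∧
      (∀ x y z, mul (mul x y) z = mul x (mul y z)) ∧
      (∀ x, mul one x = x) ∧ (∀ x, mul x one = x) ∧
      (∀ x y z, mul (x + y) z = mul x z + mul y z) ∧
      (∀ x y z, mul x (y + z) = mul x y + mul x z) ∧
      (∀ (c : k) x y, mul (c • x) y = c • mul x y) ∧
      (∀ (c : k) x y, mul x (c • y) = c • mul x y) := by

  classical
  refine ⟨DKTaux.tmul tH sA,
    ⟨DKT.mkq k R H A tH sA ((1 : H) ⊗ₜ[k] (1 : A)),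
      ⟨_, DKTaux.one_mem_K tH sA, rfl⟩⟩,
    DKTaux.tmul_spec tH sA, rfl, ?_, ?_, ?_, ?_, ?_, ?_, ?_⟩
  · intro x y z
    have l := DKTaux.tmul_spec tH sA (DKTaux.tmul tH sA x y) z
      (DKTaux.repr tH sA x * DKTaux.repr tH sA y) (DKTaux.repr tH sA z) rfl
      (DKTaux.repr_spec tH sA z).symm
    have r := DKTaux.tmul_spec tH sA x (DKTaux.tmul tH sA y z)
      (DKTaux.repr tH sA x) (DKTaux.repr tH sA y * DKTaux.repr tH sA z)
      (DKTaux.repr_spec tH sA x).symm rfl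
    exact Subtype.ext ((l.trans (by rw [mul_assoc])).trans r.symm)
  · intro x
    have l := DKTaux.tmul_spec tH sA
      (⟨DKT.mkq k R H A tH sA ((1 : H) ⊗ₜ[k] (1 : A)), ⟨_, DKTaux.one_mem_K tH sA, rfl⟩⟩)
      x ((1 : H) ⊗ₜ[k] (1 : A)) (DKTaux.repr tH sA x) rfl (DKTaux.repr_spec tH sA x).symm
    refine Subtype.ext (l.trans ?_)
    rw [← Algebra.TensorProduct.one_def, one_mul, DKTaux.repr_spec tH sA x]
  · intro x
    have l := DKTaux.tmul_spec tH sA x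
      (⟨DKT.mkq k R H A tH sA ((1 : H) ⊗ₜ[k] (1 : A)), ⟨_, DKTaux.one_mem_K tH sA, rfl⟩⟩)
      (DKTaux.repr tH sA x) ((1 : H) ⊗ₜ[k] (1 : A)) (DKTaux.repr_spec tH sA x).symm rfl
    refine Subtype.ext (l.trans ?_)
    rw [← Algebra.TensorProduct.one_def, mul_one, DKTaux.repr_spec tH sA x]
  · intro x y z
    have l := DKTaux.tmul_spec tH sA (x + y) z
      (DKTaux.repr tH sA x + DKTaux.repr tH sA y) (DKTaux.repr tH sA z)
      (by rw [map_add, DKTaux.repr_spec tH sA x, DKTaux.repr_spec tH sA y]; rfl)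
      (DKTaux.repr_spec tH sA z).symm
    refine Subtype.ext (l.trans ?_)
    rw [add_mul, map_add]
    rfl
  · intro x y z
    have l := DKTaux.tmul_spec tH sA x (y + z)
      (DKTaux.repr tH sA x) (DKTaux.repr tH sA y + DKTaux.repr tH sA z)
      (DKTaux.repr_spec tH sA x).symm
      (by rw [map_add, DKTaux.repr_spec tH sA y, DKTaux.repr_spec tH sA z]; rfl)
    refine Subtype.ext (l.trans ?_)
    rw [mul_add, map_add]
    rfl
  · intro c x y
    have l := DKTaux.tmul_spec tH sA (c • x) y
      (c • DKTaux.repr tH sA x) (DKTaux.repr tH sA y)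
      (by rw [map_smul, DKTaux.repr_spec tH sA x]; rfl)
      (DKTaux.repr_spec tH sA y).symm
    refine Subtype.ext (l.trans ?_)
    rw [smul_mul_assoc, map_smul]
    rfl
  · intro c x y
    have l := DKTaux.tmul_spec tH sA x (c • y)
      (DKTaux.repr tH sA x) (c • DKTaux.repr tH sA y)
      (DKTaux.repr_spec tH sA x).symm
      (by rw [map_smul, DKTaux.repr_spec tH sA y]; rfl)
    refine Subtype.ext (l.trans ?_)
    rw [mul_smul_comm, map_smul]
    rfl
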